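/- Let f : ℝ → (0,∞) be continuous and strictly positive, A : (-∞, r) → ℝ continuous, and suppose τ : [0,r) → [0,∞) is continuously differentiable and satisfies the ODE τ'(t) = 1 - f(A(t))/f(A(t - τ(t))) with τ(0) = τ₀. Then τ satisfies the integral equation ∫_{t-τ(t)}^{t} f(A(σ)) dσ = ∫_{-τ₀}^{0} f(A(σ)) dσ for all t ∈ [0, r). -/

import Mathlib

open Set intervalIntegral

/-- If `τ` solves the ODE `τ' = 1 - f(A(t))/f(A(t-τ(t)))` with `τ(0) = τ₀`,
then it solves the integral equation. -/
theorem stmt1 (f A τ : ℝ → ℝ) (r τ₀ : ℝ) (hr : 0 < r) (hτ₀ : 0 ≤ τ₀)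
    (hf : Continuous f) (hfpos : ∀ x, 0 < f x)
    (hA : ContinuousOn A (Iio r))
    (hτnonneg : ∀ t ∈ Ico (0:ℝ) r, 0 ≤ τ t)
    (hode : ∀ t ∈ Ico (0:ℝ) r, HasDerivAt τ (1 - f (A t) / f (A (t - τ t))) t)
    (hτ0 : τ 0 = τ₀) :
    ∀ t ∈ Ico (0:ℝ) r,
      (∫ σ in (t - τ t)..t, f (A σ)) = ∫ σ in (-τ₀)..(0:ℝ), f (A σ) := by
  have hfA : ContinuousOn (fun σ => f (A σ)) (Iio r) := hf.comp_continuousOn hA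
  have hint : ∀ a b : ℝ, a < r → b < r →
      IntervalIntegrable (fun σ => f (A σ)) MeasureTheory.volume a b := by
    intro a b ha hb
    apply (hfA.mono ?_).intervalIntegrable
    exact (ordConnected_Iio).uIcc_subset ha hb
  have hτ₀r : -τ₀ < r := by linarith
  set F : ℝ → ℝ := fun x => ∫ σ in (-τ₀)..x, f (A σ) with hF_def
  have hF : ∀ x, x < r → HasDerivAt F (f (A x)) x := by
    intro x hx
    apply intervalIntegral.integral_hasDerivAt_right (hint _ _ hτ₀r hx)
    · exact (hfA.stronglyMeasurableAtFilter isOpen_Iio x hx)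
    · exact hfA.continuousAt (Iio_mem_nhds hx)
  set g : ℝ → ℝ := fun t => F t - F (t - τ t) with hg_def
  have hg : ∀ t ∈ Ico (0:ℝ) r, HasDerivAt g 0 t := by
    intro t ht
    have htr : t < r := ht.2
    have htτ : t - τ t < r := by
      have := hτnonneg t ht; linarith
    have h1 := hF t htr
    have h2 := hF (t - τ t) htτ
    have hτ' := hode t ht
    have hid : HasDerivAt (fun t => t - τ t)
        (1 - (1 - f (A t) / f (A (t - τ t)))) t := (hasDerivAt_id t).sub hτ'
    have hcomp := HasDerivAt.comp t h2 hid
    have := h1.sub hcomp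
    have hne : f (A (t - τ t)) ≠ 0 := (hfpos _).ne'
    have h0 : f (A t) - f (A (t - τ t)) * (1 - (1 - f (A t) / f (A (t - τ t)))) = 0 := by
      rw [sub_sub_cancel, mul_div_cancel₀ (f (A t)) hne, sub_self]
    rw [h0] at this
    exact this
  have hconst : ∀ t ∈ Ico (0:ℝ) r, g t = g 0 := by
    intro t ht
    have h0 : (0:ℝ) ∈ Ico (0:ℝ) r := ⟨le_refl 0, hr⟩
    have := (convex_Ico (0:ℝ) r).norm_image_sub_le_of_norm_hasDerivWithin_le
      (f' := fun _ => (0:ℝ)) (C := 0)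
      (fun x hx => (hg x hx).hasDerivWithinAt)
      (fun x _ => by simp) h0 ht
    simp only [zero_mul, norm_le_zero_iff, sub_eq_zero] at this
    exact this
  intro t ht
  have htr : t < r := ht.2
  have htτ : t - τ t < r := by have := hτnonneg t ht; linarith
  have key : (∫ σ in (t - τ t)..t, f (A σ)) = g t := by
    rw [hg_def]
    exact (intervalIntegral.integral_interval_sub_left
      (hint _ _ hτ₀r htr) (hint _ _ hτ₀r htτ)).symm
  rw [key, hconst t ht, hg_def]
  simp [hF_def, hτ0]
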